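/- Let π ∈ S_n have ascending runs a_1, ..., a_k. For each i, let a_i^m be the subsequence of a_i with the first and last entries removed, and a_i^e be a_i with a_i^m removed. Then SC_{321}(π) = a_1^m a_2^m ··· a_k^m rev(a_k^e) rev(a_{k-1}^e) ··· rev(a_1^e). -/

import Mathlib

open List Finset

attribute [local instance] Classical.propDecidable

/-- Two lists (with distinct entries) have the same relative order. -/
def SameRel (u v : List ℕ) : Prop :=
  u.length = v.length ∧ ∀ i j, i < j → j < u.length →
    (u.getD i 0 < u.getD j 0 ↔ v.getD i 0 < v.getD j 0)

/-- `l` contains `σ` as a classical pattern. -/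
def ContainsPat (l σ : List ℕ) : Prop := ∃ u, u.Sublist l ∧ SameRel u σ

/-- `l` contains `σ` as a consecutive pattern. -/
def ContainsC (l σ : List ℕ) : Prop := ∃ u, u.IsInfix l ∧ SameRel u σ

/-- `l` avoids `σ` as a classical pattern. -/
def AvoidsPat (l σ : List ℕ) : Prop := ¬ ContainsPat l σ

/-- `l` avoids `σ` as a consecutive pattern. -/
def AvoidsC (l σ : List ℕ) : Prop := ¬ ContainsC l σ

/-- Generic right-greedy stack-sorting: push the next entry unless doing so creates a
`bad` stack (read top to bottom); otherwise pop the top of the stack to the output. -/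
noncomputable def stackAux (bad : List ℕ → Prop) : List ℕ → List ℕ → List ℕ → List ℕ
  | [], stack, out => out ++ stack
  | a :: rest, stack, out =>
    if bad (a :: stack) then
      match stack with
      | [] => stackAux bad rest [a] out
      | b :: s => stackAux bad (a :: rest) s (out ++ [b])
    else stackAux bad rest (a :: stack) out
  termination_by i s _ => 2 * i.length + s.length
  decreasing_by all_goals (first | omega | (simp [List.length_cons]; try omega))

noncomputable def SCgen (bad : List ℕ → Prop) (π : List ℕ) : List ℕ := stackAux bad π [] []

/-- The consecutive-`σ`-avoiding stack-sorting map. -/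
noncomputable def SCc (σ : List ℕ) : List ℕ → List ℕ := SCgen (fun l => ContainsC l σ)

/-- The classical-`σ`-avoiding stack-sorting map. -/
noncomputable def sCl (σ : List ℕ) : List ℕ → List ℕ := SCgen (fun l => ContainsPat l σ)

/-- `π` is (the one-line notation of) a permutation of `{1, …, n}`. -/
def IsPermList (n : ℕ) (π : List ℕ) : Prop := π.Perm ((List.range n).map (· + 1))

/-- Complementation on permutations of `{1, …, n}`. -/
def compl (n : ℕ) (π : List ℕ) : List ℕ := π.map (fun x => n + 1 - x)

/-- The finset of permutations of `{1, …, n}` in one-line notation. -/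
def permsFinset (n : ℕ) : Finset (List ℕ) := ((List.range n).map (· + 1)).permutations.toFinset

/-- The number of preimages of `π` in `S_n` under `f`. -/
noncomputable def preCount (f : List ℕ → List ℕ) (n : ℕ) (π : List ℕ) : ℕ :=
  ((permsFinset n).filter (fun τ => f τ = π)).card

/-- `r` with its first and last entries removed. -/
def midRun (r : List ℕ) : List ℕ := (r.drop 1).dropLast

/-- The first and last entries of `r` (just `r` if it has length ≤ 1). -/
def endsRun (r : List ℕ) : List ℕ := if r.length ≤ 1 then r else [r.headD 0, r.getLastD 0]

/-- `rs` is the decomposition of `π` into its ascending runs. -/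
def IsAscRuns (π : List ℕ) (rs : List (List ℕ)) : Prop :=
  π = rs.flatten ∧ (∀ r ∈ rs, r ≠ [] ∧ r.Chain' (· < ·)) ∧
    ∀ i, i + 1 < rs.length → (rs.getD (i + 1) []).headD 0 < (rs.getD i []).getLastD 0

def Bad (l : List ℕ) : Prop := ∃ x y z, [x,y,z] <:+: l ∧ ¬ x < y ∧ ¬ y < z

lemma sameRel321 (u : List ℕ) :
    SameRel u [3,2,1] ↔ ∃ x y z, u = [x,y,z] ∧ ¬ x < y ∧ ¬ y < z := by
  constructor
  · rintro ⟨hlen, h⟩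
    match u, hlen with
    | [x,y,z], _ =>
      refine ⟨x, y, z, rfl, ?_, ?_⟩
      · have := h 0 1 (by norm_num) (by simp)
        simpa using this
      · have := h 1 2 (by norm_num) (by simp)
        simpa using this
  · rintro ⟨x, y, z, rfl, h1, h2⟩
    refine ⟨rfl, ?_⟩
    intro i j hij hj
    simp only [List.length_cons, List.length_nil] at hj
    interval_cases j <;> interval_cases i <;> simp_all <;> omega

lemma badIff (l : List ℕ) : ContainsC l [3,2,1] ↔ Bad l := by
  constructor
  · rintro ⟨u, hinf, hrel⟩
    rw [sameRel321] at hrel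
    obtain ⟨x, y, z, rfl, h1, h2⟩ := hrel
    exact ⟨x, y, z, hinf, h1, h2⟩
  · rintro ⟨x, y, z, hinf, h1, h2⟩
    exact ⟨[x,y,z], hinf, (sameRel321 _).2 ⟨x, y, z, rfl, h1, h2⟩⟩

lemma bad_cons (a : ℕ) (l : List ℕ) :
    Bad (a :: l) ↔ (∃ y z t, l = y :: z :: t ∧ ¬ a < y ∧ ¬ y < z) ∨ Bad l := by
  constructor
  · rintro ⟨x, y, z, hinf, h1, h2⟩
    rw [List.infix_cons_iff] at hinf
    rcases hinf with ⟨t, ht⟩ | hinf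
    · simp only [List.cons_append] at ht
      injection ht with h ht'
      subst h
      exact Or.inl ⟨y, z, t, ht'.symm, h1, h2⟩
    · exact Or.inr ⟨x, y, z, hinf, h1, h2⟩
  · rintro (⟨y, z, t, rfl, h1, h2⟩ | ⟨x, y, z, hinf, h1, h2⟩)
    · exact ⟨a, y, z, ⟨[], t, by simp⟩, h1, h2⟩
    · exact ⟨x, y, z, hinf.trans ((List.suffix_cons a l).isInfix), h1, h2⟩

lemma not_bad_short (l : List ℕ) (h : l.length < 3) : ¬ Bad l := by
  rintro ⟨x, y, z, hinf, -, -⟩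
  have := hinf.length_le
  simp at this; omega

-- step lemmas
lemma stackAux_nil (bad : List ℕ → Prop) (S O : List ℕ) : stackAux bad [] S O = O ++ S := by
  rw [stackAux.eq_def]

lemma stackAux_push (bad : List ℕ → Prop) (a : ℕ) (rest S O : List ℕ) (h : ¬ bad (a :: S)) :
    stackAux bad (a :: rest) S O = stackAux bad rest (a :: S) O := by
  rw [stackAux.eq_def]; dsimp only; rw [if_neg h]

lemma stackAux_pop (bad : List ℕ → Prop) (a b : ℕ) (rest s O : List ℕ) (h : bad (a :: b :: s)) :
    stackAux bad (a :: rest) (b :: s) O = stackAux bad (a :: rest) s (O ++ [b]) := by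
  rw [stackAux.eq_def]; dsimp only; rw [if_pos h]

-- pushing a safe element keeps stack non-bad
lemma notBad_cons (a : ℕ) (S : List ℕ) (hS : ¬ Bad S)
    (htop : S = [] ∨ a < S.headD 0) : ¬ Bad (a :: S) := by
  rw [bad_cons]
  rintro (⟨y, z, t, rfl, h1, h2⟩ | hb)
  · rcases htop with h | h
    · simp at h
    · simp only [List.headD_cons] at h; exact h1 h
  · exact hS hb

lemma notBad_cons2 (a b : ℕ) (S : List ℕ) (hS : ¬ Bad (b :: S))
    (htop : S = [] ∨ b < S.headD 0) : ¬ Bad (a :: b :: S) := by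
  rw [bad_cons]
  rintro (⟨y, z, t, heq, h1, h2⟩ | hb)
  · injection heq with h heq'
    subst h
    rcases htop with h | h
    · rw [h] at heq'; simp at heq'
    · subst heq'; simp only [List.headD_cons] at h; exact h2 h
  · exact hS hb

lemma inner (l : List ℕ) : ∀ (rest S : List ℕ) (x1 cur : ℕ) (O : List ℕ), l ≠ [] →
    Chain' (· < ·) (cur :: l) → x1 < cur →
    (S = [] ∨ x1 < S.headD 0) → ¬ Bad (x1 :: S) →
    stackAux Bad (l ++ rest) (cur :: x1 :: S) O =
      stackAux Bad rest (l.getLastD 0 :: x1 :: S) (O ++ cur :: l.dropLast) := by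
  induction l with
  | nil => intro _ _ _ _ _ h; exact absurd rfl h
  | cons y l' ih =>
    intro rest S x1 cur O _ hch hx1 htop hnb
    have hcury : cur < y := (List.isChain_cons_cons.1 hch).1
    have hpop : Bad (y :: cur :: x1 :: S) := by
      rw [bad_cons]
      exact Or.inl ⟨cur, x1, S, rfl, by omega, by omega⟩
    have hpush : ¬ Bad (y :: x1 :: S) := notBad_cons2 _ _ _ hnb htop
    rw [List.cons_append, stackAux_pop _ _ _ _ _ _ hpop,
      stackAux_push _ _ _ _ _ hpush]
    rcases eq_or_ne l' [] with rfl | hne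
    · simp [stackAux]
    · rw [ih rest S x1 y (O ++ [cur]) hne (List.isChain_cons_cons.1 hch).2 (by omega) htop hnb]
      congr 1
      · rcases List.exists_cons_of_ne_nil hne with ⟨b, l'', rfl⟩
        simp [List.getLastD_cons]
      · simp [List.dropLast_cons_of_ne_nil hne]

lemma runL (r rest S O : List ℕ) (hne : r ≠ []) (hch : Chain' (· < ·) r)
    (hS : ¬ Bad S) (htop : S = [] ∨ r.headD 0 < S.headD 0) :
    stackAux Bad (r ++ rest) S O =
      stackAux Bad rest ((endsRun r).reverse ++ S) (O ++ midRun r) := by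
  match r, hne with
  | [x], _ =>
    rw [List.cons_append, List.nil_append,
      stackAux_push _ _ _ _ _ (notBad_cons x S hS (by simpa using htop))]
    simp [endsRun, midRun]
  | x :: y :: r', _ =>
    have hxy : x < y := (List.isChain_cons_cons.1 hch).1
    have h1 : ¬ Bad (x :: S) := notBad_cons x S hS (by simpa using htop)
    have h2 : ¬ Bad (y :: x :: S) := notBad_cons2 _ _ _ h1 (by simpa using htop)
    rw [List.cons_append, stackAux_push _ _ _ _ _ h1, List.cons_append,
      stackAux_push _ _ _ _ _ h2]
    rcases eq_or_ne r' [] with rfl | hne'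
    · simp [endsRun, midRun]
    · rw [inner r' rest S x y O hne' (List.isChain_cons_cons.1 hch).2 hxy (by simpa using htop) h1]
      rcases List.exists_cons_of_ne_nil hne' with ⟨b, l'', rfl⟩
      simp [endsRun, midRun, List.getLastD_cons]

lemma ends_ne (r : List ℕ) (hne : r ≠ []) : (endsRun r).reverse ++ S ≠ [] := by
  rcases List.exists_cons_of_ne_nil hne with ⟨b, t, rfl⟩
  simp [endsRun]
  split <;> simp

lemma ends_head (r S : List ℕ) (hne : r ≠ []) :
    ((endsRun r).reverse ++ S).headD 0 = r.getLastD 0 := by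
  rcases List.exists_cons_of_ne_nil hne with ⟨b, t, rfl⟩
  unfold endsRun
  rcases eq_or_ne t [] with rfl | h
  · simp
  · have ht := List.length_pos_iff.2 h
    rw [if_neg (by simp only [List.length_cons]; omega)]
    simp

lemma notBad_ends (r S : List ℕ) (hne : r ≠ []) (hch : Chain' (· < ·) r) (hS : ¬ Bad S)
    (htop : S = [] ∨ r.headD 0 < S.headD 0) : ¬ Bad ((endsRun r).reverse ++ S) := by
  match r, hne with
  | [x], _ =>
    simpa [endsRun] using notBad_cons x S hS (by simpa using htop)
  | x :: y :: r', _ =>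
    have h1 : ¬ Bad (x :: S) := notBad_cons x S hS (by simpa using htop)
    have h2 : ¬ Bad ((x :: y :: r').getLastD 0 :: x :: S) :=
      notBad_cons2 _ _ _ h1 (by simpa using htop)
    simpa [endsRun] using h2

lemma mainL (rs : List (List ℕ)) : ∀ (S O : List ℕ),
    (∀ r ∈ rs, r ≠ [] ∧ Chain' (· < ·) r) →
    (∀ i, i + 1 < rs.length → (rs.getD (i + 1) []).headD 0 < (rs.getD i []).getLastD 0) →
    ¬ Bad S →
    (rs = [] ∨ S = [] ∨ (rs.headD []).headD 0 < S.headD 0) →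
    stackAux Bad rs.flatten S O =
      O ++ (rs.map midRun).flatten ++ ((rs.reverse.map (fun r => (endsRun r).reverse)).flatten ++ S) := by
  induction rs with
  | nil => intro S O _ _ _ _; simp [stackAux_nil]
  | cons r rs' ih =>
    intro S O h1 h2 hS htop
    have hr := h1 r (by simp)
    have hjoin : (r :: rs').flatten = r ++ rs'.flatten := by simp
    rw [hjoin, runL r rs'.flatten S O hr.1 hr.2 hS (by simpa using htop)]
    rw [ih ((endsRun r).reverse ++ S) (O ++ midRun r)
      (fun q hq => h1 q (by simp [hq]))
      (fun i hi => by simpa using h2 (i + 1) (by simp; omega))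
      (notBad_ends r S hr.1 hr.2 hS (by simpa using htop))
      ?_]
    · simp [List.append_assoc]
    · rcases eq_or_ne rs' [] with rfl | hne
      · left; rfl
      · right; right
        rw [ends_head r S hr.1]
        rcases List.exists_cons_of_ne_nil hne with ⟨q, qs, rfl⟩
        have := h2 0 (by simp)
        simpa using this

/-- If π has ascending runs a_1, …, a_k then
SC_{321}(π) = a_1^m ⋯ a_k^m rev(a_k^e) ⋯ rev(a_1^e). -/
theorem sc321_formula (n : ℕ) (π : List ℕ) (hπ : IsPermList n π)
    (rs : List (List ℕ)) (hrs : IsAscRuns π rs) :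
    SCc [3, 2, 1] π =
      (rs.map midRun).flatten ++ (rs.reverse.map (fun r => (endsRun r).reverse)).flatten := by

  obtain ⟨hjoin, h1, h2⟩ := hrs
  have hbad : (fun l => ContainsC l [3, 2, 1]) = Bad := funext fun l => propext (badIff l)
  rw [SCc, SCgen, hbad, hjoin]
  rw [mainL rs [] [] h1 h2 (not_bad_short [] (by simp)) (Or.inr (Or.inl rfl))]
  simp
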